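/- arXiv:1902.08223 — 2 statements merged into one kernel-verified Lean document; each statement's English description precedes it below -/
import Mathlib

section
/- If a Young diagram Y has z steps, indexed so that the steps use rows s_1 < … < s_z and columns t_1 < … < t_z, then the map sending (x,y) ∈ Y_z to the block {(s,t) ∈ Y : s_{x−1} < s ≤ s_x, t_{y−1} < t ≤ t_y} (with s_0 = t_0 = 0) transforms any (i,j)-local partition of Y_z into actual rectangles into an (i,j)-local partition of Y into actual rectangles. -/
open scoped Classical

/-- The staircase Young diagram `Y_z = {(s,t) ∈ [z]×[z] : s+t ≤ z+1}`. -/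
def Yd (z : ℕ) : Set (ℕ × ℕ) :=
  {p | p.1 ∈ Set.Icc 1 z ∧ p.2 ∈ Set.Icc 1 z ∧ p.1 + p.2 ≤ z + 1}

/-- A Young diagram with `r` rows and `c` columns: a down-left closed subset of `[r]×[c]`. -/
def IsYoung (r c : ℕ) (Y : Set (ℕ × ℕ)) : Prop :=
  Y ⊆ Set.Icc 1 r ×ˢ Set.Icc 1 c ∧
  ∀ p ∈ Y, (2 ≤ p.1 → (p.1 - 1, p.2) ∈ Y) ∧ (2 ≤ p.2 → (p.1, p.2 - 1) ∈ Y)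

/-- A step of `Y`: an element whose right and upper neighbours are outside `Y`. -/
def IsStep (Y : Set (ℕ × ℕ)) (p : ℕ × ℕ) : Prop :=
  p ∈ Y ∧ (p.1 + 1, p.2) ∉ Y ∧ (p.1, p.2 + 1) ∉ Y

def steps (Y : Set (ℕ × ℕ)) : Set (ℕ × ℕ) := {p | IsStep Y p}

/-- A generalized rectangle in `Y`: a product set contained in `Y`. -/
def IsRect (Y R : Set (ℕ × ℕ)) : Prop :=
  (∃ S T : Set ℕ, R = S ×ˢ T) ∧ R ⊆ Y

/-- An actual rectangle in `Y`: a product of intervals contained in `Y`. -/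
def IsActualRect (Y R : Set (ℕ × ℕ)) : Prop :=
  (∃ a b u v : ℕ, R = Set.Icc a b ×ˢ Set.Icc u v) ∧ R ⊆ Y

def UsesRow (R : Set (ℕ × ℕ)) (s : ℕ) : Prop := ∃ t, (s, t) ∈ R
def UsesCol (R : Set (ℕ × ℕ)) (t : ℕ) : Prop := ∃ s, (s, t) ∈ R

/-- A cover of `Y` by generalized rectangles. -/
def IsCover (Y : Set (ℕ × ℕ)) (C : Finset (Set (ℕ × ℕ))) : Prop :=
  (∀ R ∈ C, IsRect Y R) ∧ (⋃ R ∈ C, R) = Y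

/-- `(i,j)`-locality: each row used by at most `i`, each column by at most `j` rectangles. -/
def IsLocal (i j : ℕ) (C : Finset (Set (ℕ × ℕ))) : Prop :=
  (∀ s, (C.filter (fun R => UsesRow R s)).card ≤ i) ∧
  (∀ t, (C.filter (fun R => UsesCol R t)).card ≤ j)

def IsLocalCover (i j : ℕ) (Y : Set (ℕ × ℕ)) (C : Finset (Set (ℕ × ℕ))) : Prop :=
  IsCover Y C ∧ IsLocal i j C

/-- The block of `Y` corresponding to position `(x,y)` of the staircase. -/
def blk (Y : Set (ℕ × ℕ)) (sR tC : ℕ → ℕ) (x y : ℕ) : Set (ℕ × ℕ) :=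
  {p ∈ Y | sR (x - 1) < p.1 ∧ p.1 ≤ sR x ∧ tC (y - 1) < p.2 ∧ p.2 ≤ tC y}

/-- The union of the blocks corresponding to the elements of `R ⊆ Y_z`. -/
def blowup (Y : Set (ℕ × ℕ)) (sR tC : ℕ → ℕ) (R : Set (ℕ × ℕ)) : Set (ℕ × ℕ) :=
  ⋃ p ∈ R, blk Y sR tC p.1 p.2

section Aux
variable {r c z : ℕ} {Y : Set (ℕ × ℕ)}

lemma row_closed (hY : IsYoung r c Y) : ∀ k s t, (s + k, t) ∈ Y → 1 ≤ s → (s, t) ∈ Y := by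
  intro k
  induction k with
  | zero => intro s t h _; simpa using h
  | succ k ih =>
    intro s t h hs
    have h2 := ((hY.2 _ h).1 (by simp; omega))
    have e : (s + (k+1) - 1 : ℕ) = s + k := by omega
    rw [e] at h2
    exact ih s t h2 hs

lemma col_closed (hY : IsYoung r c Y) : ∀ k s t, (s, t + k) ∈ Y → 1 ≤ t → (s, t) ∈ Y := by
  intro k
  induction k with
  | zero => intro s t h _; simpa using h
  | succ k ih =>
    intro s t h ht
    have h2 := ((hY.2 _ h).2 (by simp; omega))
    have e : (t + (k+1) - 1 : ℕ) = t + k := by omega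
    rw [e] at h2
    exact ih s t h2 ht

lemma down_closed (hY : IsYoung r c Y) {s t a b : ℕ} (h : (s, t) ∈ Y)
    (ha : 1 ≤ a) (has : a ≤ s) (hb : 1 ≤ b) (hbt : b ≤ t) : (a, b) ∈ Y := by
  have h1 : (a, t) ∈ Y := by
    have e : s = a + (s - a) := by omega
    exact row_closed hY (s - a) a t (by rw [← e]; exact h) ha
  have e : t = b + (t - b) := by omega
  exact col_closed hY (t - b) a b (by rw [← e]; exact h1) hb

lemma mem_bounds (hY : IsYoung r c Y) {p : ℕ × ℕ} (hp : p ∈ Y) :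
    1 ≤ p.1 ∧ p.1 ≤ r ∧ 1 ≤ p.2 ∧ p.2 ≤ c := by
  have h := hY.1 hp
  exact ⟨h.1.1, h.1.2, h.2.1, h.2.2⟩

lemma exists_step (hY : IsYoung r c Y) {p : ℕ × ℕ} (hp : p ∈ Y) :
    ∃ q ∈ steps Y, p.1 ≤ q.1 ∧ p.2 ≤ q.2 := by
  suffices h : ∀ n s t, (s, t) ∈ Y → r + c - s - t ≤ n → ∃ q ∈ steps Y, s ≤ q.1 ∧ t ≤ q.2 by
    exact h (r + c) p.1 p.2 (by simpa using hp) (by omega)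
  intro n
  induction n with
  | zero =>
    intro s t h hm
    obtain ⟨hs1, hsr, ht1, htc⟩ := mem_bounds hY h
    refine ⟨(s, t), ⟨h, ?_, ?_⟩, le_refl _, le_refl _⟩
    · intro hc; obtain ⟨_, h2, _, _⟩ := mem_bounds hY hc; omega
    · intro hc; obtain ⟨_, _, _, h2⟩ := mem_bounds hY hc; omega
  | succ n ih =>
    intro s t h hm
    by_cases h1 : (s + 1, t) ∈ Y
    · obtain ⟨_, h2, _, _⟩ := mem_bounds hY h1
      obtain ⟨_, _, _, h3⟩ := mem_bounds hY h
      obtain ⟨q, hq, hq1, hq2⟩ := ih (s+1) t h1 (by omega)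
      exact ⟨q, hq, by omega, hq2⟩
    · by_cases h2 : (s, t + 1) ∈ Y
      · obtain ⟨_, _, _, h3⟩ := mem_bounds hY h2
        obtain ⟨_, h4, _, _⟩ := mem_bounds hY h
        obtain ⟨q, hq, hq1, hq2⟩ := ih s (t+1) h2 (by omega)
        exact ⟨q, hq, hq1, by omega⟩
      · exact ⟨(s, t), ⟨h, h1, h2⟩, le_refl _, le_refl _⟩

lemma step_fst_inj (hY : IsYoung r c Y) {q q' : ℕ × ℕ} (hq : q ∈ steps Y)
    (hq' : q' ∈ steps Y) (h : q.1 = q'.1) : q = q' := by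
  rcases lt_trichotomy q.2 q'.2 with hlt | heq | hgt
  · exfalso
    have hb := mem_bounds hY hq.1
    have : (q.1, q.2 + 1) ∈ Y := by
      have := down_closed hY (show (q'.1, q'.2) ∈ Y from hq'.1)
        (show 1 ≤ q.1 by omega) (by omega) (show 1 ≤ q.2 + 1 by omega) (by omega)
      simpa using this
    exact hq.2.2 this
  · exact Prod.ext h heq
  · exfalso
    have hb := mem_bounds hY hq'.1
    have : (q'.1, q'.2 + 1) ∈ Y := by
      have := down_closed hY (show (q.1, q.2) ∈ Y from hq.1)
        (show 1 ≤ q'.1 by omega) (by omega) (show 1 ≤ q'.2 + 1 by omega) (by omega)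
      simpa using this
    exact hq'.2.2 this

lemma step_anti (hY : IsYoung r c Y) {q q' : ℕ × ℕ} (hq : q ∈ steps Y)
    (hq' : q' ∈ steps Y) (h : q.1 < q'.1) : q'.2 < q.2 := by
  by_contra hc
  push_neg at hc
  have hb := mem_bounds hY hq.1
  have hb' := mem_bounds hY hq'.1
  have : (q.1 + 1, q.2) ∈ Y :=
    down_closed hY (show (q'.1, q'.2) ∈ Y from hq'.1) (by omega) (by omega) (by omega) (by omega)
  exact hq.2.1 this

end Aux

section Pairing
variable {r c z : ℕ} {Y : Set (ℕ × ℕ)} {sR tC : ℕ → ℕ}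

lemma pairing (hY : IsYoung r c Y)
    (hsmono : StrictMonoOn sR (Set.Icc 0 z)) (htmono : StrictMonoOn tC (Set.Icc 0 z))
    (hrows : Prod.fst '' steps Y = sR '' Set.Icc 1 z)
    (hcols : Prod.snd '' steps Y = tC '' Set.Icc 1 z) :
    ∀ x ∈ Set.Icc 1 z, ∀ q ∈ steps Y, q.1 = sR x → q.2 = tC (z + 1 - x) := by
  have hex : ∀ x ∈ Set.Icc 1 z, ∃ q, q ∈ steps Y ∧ q.1 = sR x ∧
      ∃ y, y ∈ Set.Icc 1 z ∧ q.2 = tC y := by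
    intro x hx
    have h1 : sR x ∈ Prod.fst '' steps Y := by rw [hrows]; exact ⟨x, hx, rfl⟩
    obtain ⟨q, hq, hq1⟩ := h1
    have h2 : q.2 ∈ tC '' Set.Icc 1 z := by rw [← hcols]; exact ⟨q, hq, rfl⟩
    obtain ⟨y, hy, hy2⟩ := h2
    exact ⟨q, hq, hq1, y, hy, hy2.symm⟩
  choose! q hq hq1 g hg hg2 using hex
  have ganti : ∀ x ∈ Set.Icc 1 z, ∀ x' ∈ Set.Icc 1 z, x < x' → g x' < g x := by
    intro x hx x' hx' hlt
    have hr : sR x < sR x' := by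
      apply hsmono (by simp [Set.mem_Icc] at hx ⊢; omega)
        (by simp [Set.mem_Icc] at hx' ⊢; omega) hlt
    have hfst : (q x).1 < (q x').1 := by rw [hq1 x hx, hq1 x' hx']; exact hr
    have := step_anti hY (hq x hx) (hq x' hx') hfst
    rw [hg2 x hx, hg2 x' hx'] at this
    by_contra hc
    push_neg at hc
    have := htmono.monotoneOn
      (by have := hg x hx; simp [Set.mem_Icc] at this ⊢; omega)
      (by have := hg x' hx'; simp [Set.mem_Icc] at this ⊢; omega) hc
    omega
  have key : ∀ k x, 1 ≤ x → x + k ≤ z → g (x + k) + k ≤ g x := by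
    intro k
    induction k with
    | zero => intro x _ _; simp
    | succ k ih =>
      intro x hx1 hxk
      have h1 := ih x hx1 (by omega)
      have h2 := ganti (x + k) (by simp [Set.mem_Icc]; omega)
        (x + k + 1) (by simp [Set.mem_Icc]; omega) (by omega)
      have e : x + (k + 1) = x + k + 1 := by omega
      rw [e]
      omega
  have gval : ∀ x ∈ Set.Icc 1 z, g x = z + 1 - x := by
    intro x hx
    simp [Set.mem_Icc] at hx
    have h1 := key (z - x) x (by omega) (by omega)
    have h2 := key (x - 1) 1 (by omega) (by omega)
    have e1 : x + (z - x) = z := by omega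
    have e2 : 1 + (x - 1) = x := by omega
    rw [e1] at h1; rw [e2] at h2
    have hz : g z ∈ Set.Icc 1 z := hg z (by simp [Set.mem_Icc]; omega)
    have h1' : g 1 ∈ Set.Icc 1 z := hg 1 (by simp [Set.mem_Icc]; omega)
    simp [Set.mem_Icc] at hz h1'
    omega
  intro x hx q' hq' hq'1
  have heq : q' = q x := step_fst_inj hY hq' (hq x hx) (by rw [hq'1, hq1 x hx])
  rw [heq, hg2 x hx, gval x hx]

section Blocks
variable {r c z : ℕ} {Y : Set (ℕ × ℕ)} {sR tC : ℕ → ℕ}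

/-- picking the index interval containing s -/
lemma find_idx (hsmono : StrictMonoOn sR (Set.Icc 0 z)) {a b s : ℕ}
    (ha : 1 ≤ a) (hab : a ≤ b) (hb : b ≤ z) (h1 : sR (a - 1) < s) (h2 : s ≤ sR b) :
    ∃ x, a ≤ x ∧ x ≤ b ∧ sR (x - 1) < s ∧ s ≤ sR x := by
  have hP : a ≤ b ∧ s ≤ sR b := ⟨hab, h2⟩
  classical
  let P : ℕ → Prop := fun x => a ≤ x ∧ s ≤ sR x
  have hPb : P b := ⟨hab, h2⟩
  have hfind := Nat.find_spec ⟨b, hPb⟩ (p := P)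
  set x := Nat.find (⟨b, hPb⟩ : ∃ x, P x) with hxdef
  have hxb : x ≤ b := Nat.find_min' _ hPb
  refine ⟨x, hfind.1, hxb, ?_, hfind.2⟩
  rcases eq_or_lt_of_le hfind.1 with he | hlt
  · rw [← he]; exact h1
  · have := Nat.find_min (⟨b, hPb⟩ : ∃ x, P x) (m := x - 1) (by omega)
    simp only [P, not_and, not_le] at this
    exact this (by omega)

lemma idx_unique (hsmono : StrictMonoOn sR (Set.Icc 0 z)) {s x x' : ℕ}
    (hx : x ∈ Set.Icc 1 z) (hx' : x' ∈ Set.Icc 1 z)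
    (h1 : sR (x - 1) < s) (h2 : s ≤ sR x) (h1' : sR (x' - 1) < s) (h2' : s ≤ sR x') :
    x = x' := by
  simp [Set.mem_Icc] at hx hx'
  by_contra hne
  rcases lt_or_gt_of_ne hne with hlt | hgt
  · have : sR x ≤ sR (x' - 1) := hsmono.monotoneOn
      (by simp [Set.mem_Icc]; omega) (by simp [Set.mem_Icc]; omega) (by omega)
    omega
  · have : sR x' ≤ sR (x - 1) := hsmono.monotoneOn
      (by simp [Set.mem_Icc]; omega) (by simp [Set.mem_Icc]; omega) (by omega)
    omega

lemma blk_eq (hY : IsYoung r c Y)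
    (hsmono : StrictMonoOn sR (Set.Icc 0 z)) (htmono : StrictMonoOn tC (Set.Icc 0 z))
    (hrows : Prod.fst '' steps Y = sR '' Set.Icc 1 z)
    (hcols : Prod.snd '' steps Y = tC '' Set.Icc 1 z)
    {x y : ℕ} (hxy : (x, y) ∈ Yd z) :
    blk Y sR tC x y = Set.Icc (sR (x - 1) + 1) (sR x) ×ˢ Set.Icc (tC (y - 1) + 1) (tC y) := by
  obtain ⟨hx, hy, hsum⟩ := hxy
  simp [Set.mem_Icc] at hx hy
  ext ⟨s, t⟩
  simp only [blk, Set.mem_setOf_eq, Set.mem_prod, Set.mem_Icc]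
  constructor
  · rintro ⟨_, h1, h2, h3, h4⟩; exact ⟨⟨by omega, h2⟩, by omega, h4⟩
  · rintro ⟨⟨h1, h2⟩, h3, h4⟩
    -- need (s, t) ∈ Y
    have hq : sR x ∈ Prod.fst '' steps Y := by rw [hrows]; exact ⟨x, by simp [Set.mem_Icc]; omega, rfl⟩
    obtain ⟨q, hqs, hq1⟩ := hq
    have hq2 : q.2 = tC (z + 1 - x) :=
      pairing hY hsmono htmono hrows hcols x (by simp [Set.mem_Icc]; omega) q hqs hq1
    have htle : tC y ≤ tC (z + 1 - x) := htmono.monotoneOn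
      (by simp [Set.mem_Icc]; omega) (by simp [Set.mem_Icc]; omega) (by omega)
    have hmem : (s, t) ∈ Y := by
      have := down_closed hY (show (q.1, q.2) ∈ Y from hqs.1)
        (show 1 ≤ s by omega) (by omega) (show 1 ≤ t by omega) (by omega)
      exact this
    exact ⟨hmem, by omega, h2, by omega, h4⟩

lemma blk_cover (hY : IsYoung r c Y) (hs0 : sR 0 = 0) (ht0 : tC 0 = 0)
    (hsmono : StrictMonoOn sR (Set.Icc 0 z)) (htmono : StrictMonoOn tC (Set.Icc 0 z))
    (hrows : Prod.fst '' steps Y = sR '' Set.Icc 1 z)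
    (hcols : Prod.snd '' steps Y = tC '' Set.Icc 1 z)
    {p : ℕ × ℕ} (hp : p ∈ Y) :
    ∃ x y, (x, y) ∈ Yd z ∧ p ∈ blk Y sR tC x y := by
  obtain ⟨hp1, _, hp2, _⟩ := mem_bounds hY hp
  obtain ⟨q, hq, hle1, hle2⟩ := exists_step hY hp
  have hq1 : q.1 ∈ sR '' Set.Icc 1 z := by rw [← hrows]; exact ⟨q, hq, rfl⟩
  obtain ⟨xs, hxs, hxse⟩ := hq1
  simp [Set.mem_Icc] at hxs
  have hq2 : q.2 = tC (z + 1 - xs) :=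
    pairing hY hsmono htmono hrows hcols xs (by simp [Set.mem_Icc]; omega) q hq hxse.symm
  obtain ⟨x, hx1, hx2, hx3, hx4⟩ := find_idx hsmono (a := 1) (b := xs) (s := p.1)
    le_rfl (by omega) (by omega) (by simp [hs0]; omega) (by rw [hxse]; omega)
  obtain ⟨y, hy1, hy2, hy3, hy4⟩ := find_idx htmono (a := 1) (b := z + 1 - xs) (s := p.2)
    le_rfl (by omega) (by omega) (by simp [ht0]; omega) (by rw [← hq2]; omega)
  refine ⟨x, y, ⟨by simp [Set.mem_Icc]; omega, by simp [Set.mem_Icc]; omega, by omega⟩, ?_⟩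
  exact ⟨hp, hx3, hx4, hy3, hy4⟩

lemma blk_sub_Y : blk Y sR tC x y ⊆ Y := fun p hp => hp.1

lemma blk_disj (hsmono : StrictMonoOn sR (Set.Icc 0 z)) (htmono : StrictMonoOn tC (Set.Icc 0 z))
    {x y x' y' : ℕ} (hx : x ∈ Set.Icc 1 z) (hy : y ∈ Set.Icc 1 z)
    (hx' : x' ∈ Set.Icc 1 z) (hy' : y' ∈ Set.Icc 1 z)
    {p : ℕ × ℕ} (h : p ∈ blk Y sR tC x y) (h' : p ∈ blk Y sR tC x' y') :
    x = x' ∧ y = y' := by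
  obtain ⟨_, a1, a2, a3, a4⟩ := h
  obtain ⟨_, b1, b2, b3, b4⟩ := h'
  exact ⟨idx_unique hsmono hx hx' a1 a2 b1 b2, idx_unique htmono hy hy' a3 a4 b3 b4⟩

end Blocks

section Main
variable {r c z : ℕ} {Y : Set (ℕ × ℕ)} {sR tC : ℕ → ℕ}

lemma blowup_rect (hY : IsYoung r c Y)
    (hsmono : StrictMonoOn sR (Set.Icc 0 z)) (htmono : StrictMonoOn tC (Set.Icc 0 z))
    (hrows : Prod.fst '' steps Y = sR '' Set.Icc 1 z)
    (hcols : Prod.snd '' steps Y = tC '' Set.Icc 1 z)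
    {a b u v : ℕ} (hab : a ≤ b) (huv : u ≤ v)
    (hsub : Set.Icc a b ×ˢ Set.Icc u v ⊆ Yd z) :
    blowup Y sR tC (Set.Icc a b ×ˢ Set.Icc u v) =
      Set.Icc (sR (a - 1) + 1) (sR b) ×ˢ Set.Icc (tC (u - 1) + 1) (tC v) := by
  have hau : ((a, u) : ℕ × ℕ) ∈ Yd z := hsub (by simp [Set.mem_Icc]; omega)
  have hbu : ((b, u) : ℕ × ℕ) ∈ Yd z := hsub (by simp [Set.mem_Icc]; omega)
  have hav : ((a, v) : ℕ × ℕ) ∈ Yd z := hsub (by simp [Set.mem_Icc]; omega)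
  obtain ⟨ha1, hu1, _⟩ := hau
  obtain ⟨hb1, _, _⟩ := hbu
  obtain ⟨_, hv1, _⟩ := hav
  simp [Set.mem_Icc] at ha1 hu1 hb1 hv1
  ext ⟨s, t⟩
  constructor
  · intro hmem
    simp only [blowup, Set.mem_iUnion] at hmem
    obtain ⟨⟨x, y⟩, hxyR, hblk⟩ := hmem
    simp [Set.mem_Icc] at hxyR
    obtain ⟨⟨hax, hxb⟩, huy, hyv⟩ := hxyR
    change (s, t) ∈ blk Y sR tC x y at hblk
    obtain ⟨_, c1, c2, c3, c4⟩ := hblk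
    have e1 : sR (a - 1) ≤ sR (x - 1) := hsmono.monotoneOn
      (by simp [Set.mem_Icc]; omega) (by simp [Set.mem_Icc]; omega) (by omega)
    have e2 : sR x ≤ sR b := hsmono.monotoneOn
      (by simp [Set.mem_Icc]; omega) (by simp [Set.mem_Icc]; omega) (by omega)
    have e3 : tC (u - 1) ≤ tC (y - 1) := htmono.monotoneOn
      (by simp [Set.mem_Icc]; omega) (by simp [Set.mem_Icc]; omega) (by omega)
    have e4 : tC y ≤ tC v := htmono.monotoneOn
      (by simp [Set.mem_Icc]; omega) (by simp [Set.mem_Icc]; omega) (by omega)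
    simp [Set.mem_Icc]
    omega
  · intro hmem
    simp only [Set.mem_prod, Set.mem_Icc] at hmem
    obtain ⟨⟨h1, h2⟩, h3, h4⟩ := hmem
    obtain ⟨x, hx1, hx2, hx3, hx4⟩ := find_idx hsmono (a := a) (b := b) (s := s)
      (by omega) hab (by omega) (by omega) h2
    obtain ⟨y, hy1, hy2, hy3, hy4⟩ := find_idx htmono (a := u) (b := v) (s := t)
      (by omega) huv (by omega) (by omega) h4
    have hxyR : ((x, y) : ℕ × ℕ) ∈ Set.Icc a b ×ˢ Set.Icc u v := by
      simp [Set.mem_Icc]; omega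
    have hxyY : ((x, y) : ℕ × ℕ) ∈ Yd z := hsub hxyR
    have hb := blk_eq hY hsmono htmono hrows hcols hxyY
    simp only [blowup, Set.mem_iUnion]
    refine ⟨(x, y), hxyR, ?_⟩
    rw [hb]
    simp [Set.mem_Icc]
    omega

lemma blowup_mem_uniq (hsmono : StrictMonoOn sR (Set.Icc 0 z))
    (htmono : StrictMonoOn tC (Set.Icc 0 z))
    {R : Set (ℕ × ℕ)} (hR : R ⊆ Yd z) {p : ℕ × ℕ} (hp : p ∈ blowup Y sR tC R)
    {x y : ℕ} (hx : x ∈ Set.Icc 1 z) (hy : y ∈ Set.Icc 1 z)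
    (hb : p ∈ blk Y sR tC x y) : (x, y) ∈ R := by
  simp only [blowup, Set.mem_iUnion] at hp
  obtain ⟨⟨x', y'⟩, hR', hb'⟩ := hp
  have hxy' := hR hR'
  obtain ⟨hx', hy', _⟩ := hxy'
  obtain ⟨e1, e2⟩ := blk_disj hsmono htmono hx hy hx' hy' hb hb'
  rw [e1, e2]; exact hR'

end Main


theorem blowup_partition (i j r c z : ℕ) (Y : Set (ℕ × ℕ)) (hY : IsYoung r c Y)
    (sR tC : ℕ → ℕ) (hs0 : sR 0 = 0) (ht0 : tC 0 = 0)
    (hsmono : StrictMonoOn sR (Set.Icc 0 z)) (htmono : StrictMonoOn tC (Set.Icc 0 z))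
    (hrows : Prod.fst '' steps Y = sR '' Set.Icc 1 z)
    (hcols : Prod.snd '' steps Y = tC '' Set.Icc 1 z)
    (C : Finset (Set (ℕ × ℕ)))
    (hrect : ∀ R ∈ C, IsActualRect (Yd z) R)
    (hcover : (⋃ R ∈ C, R) = Yd z)
    (hdisj : ∀ R ∈ C, ∀ R' ∈ C, R ≠ R' → Disjoint R R')
    (hloc : IsLocal i j C) :
    (∀ R' ∈ C.image (blowup Y sR tC), IsActualRect Y R') ∧
    (⋃ R' ∈ C.image (blowup Y sR tC), R') = Y ∧
    (∀ R' ∈ C.image (blowup Y sR tC), ∀ R'' ∈ C.image (blowup Y sR tC),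
      R' ≠ R'' → Disjoint R' R'') ∧
    IsLocal i j (C.image (blowup Y sR tC)) := by
  have hRsub : ∀ R ∈ C, R ⊆ Yd z := fun R hR => (hrect R hR).2
  have hbsubY : ∀ R : Set (ℕ × ℕ), blowup Y sR tC R ⊆ Y := by
    intro R p hp
    simp only [blowup, Set.mem_iUnion] at hp
    obtain ⟨q, _, hb⟩ := hp
    exact hb.1
  refine ⟨?_, ?_, ?_, ?_, ?_⟩
  · -- actual rectangles
    intro R' hR'
    obtain ⟨R, hR, rfl⟩ := Finset.mem_image.mp hR'
    obtain ⟨⟨a, b, u, v, hRe⟩, _⟩ := hrect R hR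
    by_cases hne : a ≤ b ∧ u ≤ v
    · refine ⟨⟨sR (a - 1) + 1, sR b, tC (u - 1) + 1, tC v, ?_⟩, hbsubY R⟩
      rw [hRe]
      exact blowup_rect hY hsmono htmono hrows hcols hne.1 hne.2 (hRe ▸ hRsub R hR)
    · have hRemp : R = ∅ := by
        rw [hRe]
        rcases not_and_or.mp hne with h | h
        · simp [Set.Icc_eq_empty (by omega : ¬ a ≤ b)]
        · simp [Set.Icc_eq_empty (by omega : ¬ u ≤ v)]
      refine ⟨⟨1, 0, 1, 0, ?_⟩, hbsubY R⟩
      rw [hRemp]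
      simp [blowup]
  · -- cover
    apply Set.Subset.antisymm
    · intro p hp
      simp only [Set.mem_iUnion] at hp
      obtain ⟨R', hR', hpR'⟩ := hp
      obtain ⟨R, hR, rfl⟩ := Finset.mem_image.mp hR'
      exact hbsubY R hpR'
    · intro p hp
      obtain ⟨x, y, hxy, hblk⟩ := blk_cover hY hs0 ht0 hsmono htmono hrows hcols hp
      have : ((x, y) : ℕ × ℕ) ∈ ⋃ R ∈ C, R := by rw [hcover]; exact hxy
      simp only [Set.mem_iUnion] at this
      obtain ⟨R, hRmem, hxyR'⟩ := this
      simp only [Set.mem_iUnion]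
      refine ⟨blowup Y sR tC R, ⟨Finset.mem_image_of_mem _ hRmem, ?_⟩⟩
      simp only [blowup, Set.mem_iUnion]
      exact ⟨(x, y), hxyR', hblk⟩
  · -- disjoint
    intro R' hR' R'' hR'' hne
    obtain ⟨R1, hR1, rfl⟩ := Finset.mem_image.mp hR'
    obtain ⟨R2, hR2, rfl⟩ := Finset.mem_image.mp hR''
    have hne12 : R1 ≠ R2 := by rintro rfl; exact hne rfl
    have hd := hdisj R1 hR1 R2 hR2 hne12
    rw [Set.disjoint_left]
    intro q hq1 hq2
    simp only [blowup, Set.mem_iUnion] at hq1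
    obtain ⟨⟨x, y⟩, hxyR1, hblk⟩ := hq1
    have hxy := hRsub R1 hR1 hxyR1
    obtain ⟨hx, hy, _⟩ := hxy
    have : ((x, y) : ℕ × ℕ) ∈ R2 :=
      blowup_mem_uniq hsmono htmono (hRsub R2 hR2) hq2 hx hy hblk
    exact Set.disjoint_left.mp hd hxyR1 this
  · -- rows local
    intro s
    set D := (C.image (blowup Y sR tC)).filter (fun R' => UsesRow R' s) with hD
    rcases D.eq_empty_or_nonempty with he | ⟨R', hR'⟩
    · rw [he]; simp
    · obtain ⟨hR'img, t0, ht0'⟩ := Finset.mem_filter.mp hR'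
      obtain ⟨R0, hR0, rfl⟩ := Finset.mem_image.mp hR'img
      simp only [blowup, Set.mem_iUnion] at ht0'
      obtain ⟨⟨x0, y0⟩, hxyR0, hblk0⟩ := ht0'
      obtain ⟨hx0, _, _⟩ := hRsub R0 hR0 hxyR0
      change (s, t0) ∈ blk Y sR tC x0 y0 at hblk0
      obtain ⟨_, c1, c2, _, _⟩ := hblk0
      have hsubD : D ⊆ (C.filter (fun R => UsesRow R x0)).image (blowup Y sR tC) := by
        intro R' hR'
        obtain ⟨hRimg, t', ht'⟩ := Finset.mem_filter.mp hR'
        obtain ⟨R, hR, rfl⟩ := Finset.mem_image.mp hRimg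
        simp only [blowup, Set.mem_iUnion] at ht'
        obtain ⟨⟨x, y⟩, hxyR, hblk⟩ := ht'
        obtain ⟨hx, _, _⟩ := hRsub R hR hxyR
        change (s, t') ∈ blk Y sR tC x y at hblk
        obtain ⟨_, d1, d2, _, _⟩ := hblk
        have hxx : x = x0 := idx_unique hsmono hx hx0 d1 d2 c1 c2
        refine Finset.mem_image_of_mem _ (Finset.mem_filter.mpr ⟨hR, ⟨y, ?_⟩⟩)
        rw [← hxx]; exact hxyR
      calc D.card ≤ ((C.filter (fun R => UsesRow R x0)).image (blowup Y sR tC)).card :=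
            Finset.card_le_card hsubD
        _ ≤ (C.filter (fun R => UsesRow R x0)).card := Finset.card_image_le
        _ ≤ i := hloc.1 x0
  · -- cols local
    intro t
    set D := (C.image (blowup Y sR tC)).filter (fun R' => UsesCol R' t) with hD
    rcases D.eq_empty_or_nonempty with he | ⟨R', hR'⟩
    · rw [he]; simp
    · obtain ⟨hR'img, s0, hs0'⟩ := Finset.mem_filter.mp hR'
      obtain ⟨R0, hR0, rfl⟩ := Finset.mem_image.mp hR'img
      simp only [blowup, Set.mem_iUnion] at hs0'
      obtain ⟨⟨x0, y0⟩, hxyR0, hblk0⟩ := hs0'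
      obtain ⟨_, hy0, _⟩ := hRsub R0 hR0 hxyR0
      change (s0, t) ∈ blk Y sR tC x0 y0 at hblk0
      obtain ⟨_, _, _, c3, c4⟩ := hblk0
      have hsubD : D ⊆ (C.filter (fun R => UsesCol R y0)).image (blowup Y sR tC) := by
        intro R' hR'
        obtain ⟨hRimg, s', hs'⟩ := Finset.mem_filter.mp hR'
        obtain ⟨R, hR, rfl⟩ := Finset.mem_image.mp hRimg
        simp only [blowup, Set.mem_iUnion] at hs'
        obtain ⟨⟨x, y⟩, hxyR, hblk⟩ := hs'
        obtain ⟨_, hy, _⟩ := hRsub R hR hxyR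
        change (s', t) ∈ blk Y sR tC x y at hblk
        obtain ⟨_, _, _, d3, d4⟩ := hblk
        have hyy : y = y0 := idx_unique htmono hy hy0 d3 d4 c3 c4
        refine Finset.mem_image_of_mem _ (Finset.mem_filter.mpr ⟨hR, ⟨x, ?_⟩⟩)
        rw [← hyy]; exact hxyR
      calc D.card ≤ ((C.filter (fun R => UsesCol R y0)).image (blowup Y sR tC)).card :=
            Finset.card_le_card hsubD
        _ ≤ (C.filter (fun R => UsesCol R y0)).card := Finset.card_image_le
        _ ≤ j := hloc.2 y0
end Pairing
end

section
/- For every k ≥ 1 there exists a Young diagram (namely the staircase with C(2k,k) steps) that cannot be covered by generalized rectangles with every row and column used at most k times; hence the sequence of local complete-bipartite covering numbers of the difference graphs H_i corresponding to the staircases Y_i is unbounded, while each H_i is itself a difference graph (local difference-graph covering number 1). -/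
open scoped Classical

open Finset Polynomial in

private lemma keyLemma (m a b : ℕ) (A B : Fin m → Finset ℕ)
    (hA : ∀ i, (A i).card = a) (hB : ∀ i, (B i).card = b)
    (hd : ∀ i, Disjoint (A i) (B i))
    (hc : ∀ i j, i < j → ((A i) ∩ (B j)).Nonempty) :
    m ≤ (a + b).choose a := by
  -- enumeration of A i
  set e : ∀ i : Fin m, Fin a → ℕ := fun i k => ((A i).orderIsoOfFin (hA i) k : ℕ) with he
  -- polynomial with roots B j
  set P : Fin m → Polynomial ℝ := fun j => ∏ y ∈ B j, (X - C (y : ℝ)) with hP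
  have hPdeg : ∀ j, (P j).natDegree = b := by
    intro j
    rw [hP]
    rw [Polynomial.natDegree_prod _ _ (fun y _ => X_sub_C_ne_zero ((y:ℕ):ℝ))]
    rw [Finset.sum_congr rfl (fun y _ => Polynomial.natDegree_X_sub_C ((y:ℕ):ℝ))]
    simp [hB j]
  have hPeval : ∀ j (x : ℝ), (P j).eval x = ∏ y ∈ B j, (x - (y : ℝ)) := by
    intro j x; simp [hP, Polynomial.eval_prod]
  set M : Matrix (Fin m) (Fin m) ℝ := fun i j => ∏ k : Fin a, (P j).eval ((e i k : ℕ) : ℝ) with hM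
  -- M is lower triangular with nonzero diagonal
  have hzero : ∀ i j, i < j → M i j = 0 := by
    intro i j hij
    obtain ⟨x, hx⟩ := hc i j hij
    rw [Finset.mem_inter] at hx
    obtain ⟨k, hk⟩ := ((A i).orderIsoOfFin (hA i)).surjective ⟨x, hx.1⟩
    have hxk : e i k = x := by rw [he]; simp [hk]
    apply Finset.prod_eq_zero (Finset.mem_univ k)
    rw [hPeval, hxk]
    exact Finset.prod_eq_zero hx.2 (by ring)
  have hdiag : ∀ i, M i i ≠ 0 := by
    intro i
    apply Finset.prod_ne_zero_iff.2
    intro k _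
    rw [hPeval]
    apply Finset.prod_ne_zero_iff.2
    intro y hy
    have hek : e i k ∈ A i := ((A i).orderIsoOfFin (hA i) k).2
    have : e i k ≠ y := by
      intro h; exact (Finset.disjoint_left.1 (hd i)) hek (h ▸ hy)
    intro h
    exact this (Nat.cast_injective (by linarith [sub_eq_zero.1 h] : ((e i k : ℕ):ℝ) = (y:ℕ)))
  -- factorization
  set σ := Sym (Fin (b + 1)) a
  set g : (Fin a → Fin (b + 1)) → σ := fun φ => ⟨Multiset.map φ Finset.univ.val, by simp⟩ with hg
  set U : Matrix (Fin m) σ ℝ := fun i s =>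
    ∑ φ ∈ Finset.univ.filter (fun φ : Fin a → Fin (b+1) => g φ = s),
      ∏ k : Fin a, ((e i k : ℕ) : ℝ) ^ ((φ k : ℕ)) with hU
  set W : Matrix σ (Fin m) ℝ := fun s j => (Multiset.map (fun d : Fin (b+1) => (P j).coeff d) s.val).prod with hW
  have hfact : M = U * W := by
    funext i j
    rw [Matrix.mul_apply, hM]
    have expand : (fun i j => ∏ k : Fin a, (P j).eval ((e i k : ℕ) : ℝ)) i j
        = ∑ φ : Fin a → Fin (b+1), ∏ k : Fin a, ((P j).coeff (φ k) * ((e i k : ℕ):ℝ) ^ ((φ k : ℕ))) := by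
      have : ∀ k : Fin a, (P j).eval ((e i k : ℕ) : ℝ)
          = ∑ d : Fin (b+1), (P j).coeff d * ((e i k : ℕ):ℝ) ^ (d : ℕ) := by
        intro k
        rw [Polynomial.eval_eq_sum_range' (show (P j).natDegree < b+1 by rw [hPdeg]; omega), Finset.sum_range]
      simp_rw [this]
      rw [Finset.prod_univ_sum]
      rw [Fintype.piFinset_univ]
    rw [expand]
    rw [← Finset.sum_fiberwise (Finset.univ) g
      (fun φ => ∏ k : Fin a, ((P j).coeff (φ k) * ((e i k : ℕ):ℝ) ^ ((φ k : ℕ))))]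
    apply Finset.sum_congr rfl
    intro s _
    rw [hU]
    rw [Finset.sum_mul]
    apply Finset.sum_congr rfl
    intro φ hφ
    rw [Finset.mem_filter] at hφ
    rw [Finset.prod_mul_distrib]
    rw [mul_comm]
    congr 1
    rw [hW, ← hφ.2, hg]
    simp [Multiset.map_map, Finset.prod, Function.comp_def]
  -- rank
  have hunit : IsUnit M := by
    rw [Matrix.isUnit_iff_isUnit_det, isUnit_iff_ne_zero]
    rw [Matrix.det_of_lowerTriangular M (by intro i j h; exact hzero i j h)]
    exact Finset.prod_ne_zero_iff.2 (fun i _ => hdiag i)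
  have h1 : M.rank = m := by rw [Matrix.rank_of_isUnit M hunit, Fintype.card_fin]
  have h2 : M.rank ≤ Fintype.card σ := by
    rw [hfact]
    exact le_trans (Matrix.rank_mul_le_left U W) (Matrix.rank_le_card_width U)
  have h3 : Fintype.card σ = (a + b).choose a := by
    rw [Sym.card_sym_eq_multichoose, Nat.multichoose_eq, Fintype.card_fin]
    congr 1
    omega
  omega

open Finset Polynomial in
private lemma padLemma (m a b : ℕ) (A B : Fin m → Finset ℕ)
    (hA : ∀ i, (A i).card ≤ a) (hB : ∀ i, (B i).card ≤ b)
    (hd : ∀ i, Disjoint (A i) (B i))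
    (hc : ∀ i j, i < j → ((A i) ∩ (B j)).Nonempty) :
    m ≤ (a + b).choose a := by
  classical
  set N : ℕ := (Finset.univ.sup fun i : Fin m => (A i ∪ B i).sup id) + 1 with hN
  have hlt : ∀ i : Fin m, ∀ x ∈ A i ∪ B i, x < N := by
    intro i x hx
    have : (A i ∪ B i).sup id ≤ Finset.univ.sup fun i : Fin m => (A i ∪ B i).sup id :=
      Finset.le_sup (f := fun i : Fin m => (A i ∪ B i).sup id) (Finset.mem_univ i)
    have h2 := le_trans (Finset.le_sup (f := id) hx) this
    simp only [id] at h2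
    omega
  set padA : Fin m → Finset ℕ := fun i =>
    (Finset.range (a - (A i).card)).image (N + (i : ℕ) * (a + b) + ·) with hpA
  set padB : Fin m → Finset ℕ := fun i =>
    (Finset.range (b - (B i).card)).image (N + (i : ℕ) * (a + b) + a + ·) with hpB
  have hpA_mem : ∀ i x, x ∈ padA i → N + (i:ℕ)*(a+b) ≤ x ∧ x < N + (i:ℕ)*(a+b) + a := by
    intro i x hx
    rw [hpA, Finset.mem_image] at hx
    obtain ⟨r, hr, rfl⟩ := hx
    rw [Finset.mem_range] at hr
    omega
  have hpB_mem : ∀ i x, x ∈ padB i → N + (i:ℕ)*(a+b) + a ≤ x ∧ x < N + (i:ℕ)*(a+b) + a + b := by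
    intro i x hx
    rw [hpB, Finset.mem_image] at hx
    obtain ⟨r, hr, rfl⟩ := hx
    rw [Finset.mem_range] at hr
    have := hB i
    omega
  set A' : Fin m → Finset ℕ := fun i => A i ∪ padA i with hA'
  set B' : Fin m → Finset ℕ := fun i => B i ∪ padB i with hB'
  have hAcard : ∀ i, (A' i).card = a := by
    intro i
    rw [hA', Finset.card_union_of_disjoint, hpA, Finset.card_image_of_injective _ (add_right_injective _),
      Finset.card_range]
    · have := hA i; omega
    · rw [Finset.disjoint_left]
      intro x hx hx'
      have h1 := hlt i x (Finset.mem_union_left _ hx)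
      have h2 := (hpA_mem i x hx').1
      omega
  have hBcard : ∀ i, (B' i).card = b := by
    intro i
    rw [hB', Finset.card_union_of_disjoint, hpB, Finset.card_image_of_injective _ (add_right_injective _),
      Finset.card_range]
    · have := hB i; omega
    · rw [Finset.disjoint_left]
      intro x hx hx'
      have h1 := hlt i x (Finset.mem_union_right _ hx)
      have h2 := (hpB_mem i x hx').1
      omega
  have hdisj : ∀ i, Disjoint (A' i) (B' i) := by
    intro i
    rw [Finset.disjoint_left]
    intro x hx hx'
    rw [hA', Finset.mem_union] at hx
    rw [hB', Finset.mem_union] at hx'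
    rcases hx with hx | hx <;> rcases hx' with hx' | hx'
    · exact (Finset.disjoint_left.1 (hd i)) hx hx'
    · have := hlt i x (Finset.mem_union_left _ hx); have := (hpB_mem i x hx').1; omega
    · have := hlt i x (Finset.mem_union_right _ hx'); have := (hpA_mem i x hx).1; omega
    · have := (hpA_mem i x hx).2; have := (hpB_mem i x hx').1; omega
  have hcross : ∀ i j, i < j → ((A' i) ∩ (B' j)).Nonempty := by
    intro i j hij
    obtain ⟨x, hx⟩ := hc i j hij
    rw [Finset.mem_inter] at hx
    exact ⟨x, Finset.mem_inter.2 ⟨Finset.mem_union_left _ hx.1, Finset.mem_union_left _ hx.2⟩⟩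
  exact keyLemma m a b A' B' hAcard hBcard hdisj hcross

lemma noCover (k : ℕ) (hk : 1 ≤ k) :
    ¬ ∃ C : Finset (Set (ℕ × ℕ)), IsLocalCover k k (Yd ((2*k).choose k)) C := by
  rintro ⟨C, ⟨⟨hrect, hcover⟩, hrow, hcol⟩⟩
  set z := (2*k).choose k with hz
  have hz2 : 2 ≤ z := by
    calc 2 ≤ k + 1 := by omega
    _ = (k+1).choose k := (Nat.choose_succ_self_right k).symm
    _ ≤ (2*k).choose k := Nat.choose_le_choose k (by omega)
  -- injection from C into ℕ
  set ψ : Set (ℕ × ℕ) → ℕ := fun R => if h : R ∈ C then (C.equivFin ⟨R, h⟩ : ℕ) else 0 with hψ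
  have hψinj : ∀ R ∈ C, ∀ R' ∈ C, ψ R = ψ R' → R = R' := by
    intro R hR R' hR' h
    rw [hψ] at h
    simp only [dif_pos hR, dif_pos hR'] at h
    have h2 := C.equivFin.injective (Fin.val_injective h)
    exact congrArg Subtype.val h2
  set Arow : Fin z → Finset (Set (ℕ × ℕ)) := fun s => C.filter (fun R => UsesRow R ((s:ℕ)+1)) with hAr
  set Bcol : Fin z → Finset (Set (ℕ × ℕ)) := fun t => C.filter (fun R => UsesCol R (z - (t:ℕ))) with hBc
  have hAB : ∀ s t : Fin z, (s:ℕ) ≤ (t:ℕ) → ∃ R ∈ C, R ∈ Arow s ∧ R ∈ Bcol t := by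
    intro s t hst
    have hs := s.isLt; have ht := t.isLt
    have hp : ((s:ℕ)+1, z - (t:ℕ)) ∈ Yd z := by
      simp only [Yd, Set.mem_setOf_eq, Set.mem_Icc]
      omega
    rw [← hcover] at hp
    simp only [Set.mem_iUnion] at hp
    obtain ⟨R, hR, hpR⟩ := hp
    exact ⟨R, hR, Finset.mem_filter.2 ⟨hR, ⟨_, hpR⟩⟩, Finset.mem_filter.2 ⟨hR, ⟨_, hpR⟩⟩⟩
  have hdisjAB : ∀ s t : Fin z, (s:ℕ) < (t:ℕ) → ∀ R ∈ Arow t, R ∉ Bcol s := by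
    intro s t hst R hR hR'
    rw [hAr, Finset.mem_filter] at hR
    rw [hBc, Finset.mem_filter] at hR'
    obtain ⟨hRC, y, hy⟩ := hR
    obtain ⟨-, x, hx⟩ := hR'
    obtain ⟨⟨S, T, rfl⟩, hsub⟩ := hrect R hRC
    have hmem : ((t:ℕ)+1, z - (s:ℕ)) ∈ S ×ˢ T := ⟨hy.1, hx.2⟩
    obtain ⟨-, -, hsum⟩ := hsub hmem
    have hs := s.isLt
    simp only at hsum
    omega
  set An : Fin z → Finset ℕ := fun s => (Arow s).image ψ with hAn
  set Bn : Fin z → Finset ℕ := fun t => (Bcol t).image ψ with hBn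
  set A' : Fin (z+1) → Finset ℕ := fun i => if h : (i:ℕ) < z then An ⟨i, h⟩ else ∅ with hA'
  set B' : Fin (z+1) → Finset ℕ := fun i =>
    if h : (i:ℕ) - 1 < z ∧ 0 < (i:ℕ) then Bn ⟨(i:ℕ)-1, h.1⟩ else ∅ with hB'
  have hcards : (∀ i, (A' i).card ≤ k) ∧ ∀ i, (B' i).card ≤ k := by
    constructor <;> intro i <;> simp only [hA', hB'] <;> split_ifs with h
    · exact le_trans (Finset.card_image_le) (hrow _)
    · simp
    · exact le_trans (Finset.card_image_le) (hcol _)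
    · simp
  have hdisj : ∀ i, Disjoint (A' i) (B' i) := by
    intro i
    simp only [hA', hB']
    split_ifs with h1 h2
    · rw [Finset.disjoint_left]
      intro x hx hx'
      rw [hAn, Finset.mem_image] at hx
      rw [hBn, Finset.mem_image] at hx'
      obtain ⟨R, hR, rfl⟩ := hx
      obtain ⟨R', hR', hRR'⟩ := hx'
      have hRC : R ∈ C := Finset.mem_of_mem_filter _ hR
      have hRC' : R' ∈ C := Finset.mem_of_mem_filter _ hR'
      have hEq := hψinj R' hRC' R hRC hRR'
      rw [← hEq] at hR
      exact hdisjAB ⟨(i:ℕ)-1, h2.1⟩ ⟨i, h1⟩ (by have := h2.2; show (i:ℕ) - 1 < (i:ℕ); omega) R' hR hR'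
    · exact Finset.disjoint_empty_right _
    · exact Finset.disjoint_empty_left _
    · exact Finset.disjoint_empty_left _
  have hcross : ∀ i j : Fin (z+1), i < j → ((A' i) ∩ (B' j)).Nonempty := by
    intro i j hij
    rw [Fin.lt_def] at hij
    have hjz := j.isLt
    have hi : (i:ℕ) < z := by omega
    have hjj : (j:ℕ) - 1 < z ∧ 0 < (j:ℕ) := by omega
    obtain ⟨R, hRC, hR1, hR2⟩ := hAB ⟨i, hi⟩ ⟨(j:ℕ)-1, hjj.1⟩ (by simp; omega)
    refine ⟨ψ R, ?_⟩
    simp only [hA', hB']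
    rw [dif_pos hi, dif_pos hjj, Finset.mem_inter, hAn, hBn]
    exact ⟨Finset.mem_image_of_mem _ hR1, Finset.mem_image_of_mem _ hR2⟩
  have := padLemma (z+1) k k A' B' hcards.1 hcards.2 hdisj hcross
  rw [← two_mul, ← hz] at this
  omega

theorem staircases_unbounded :
    (∀ k : ℕ, 1 ≤ k →
      IsYoung ((2 * k).choose k) ((2 * k).choose k) (Yd ((2 * k).choose k)) ∧
      ¬ ∃ C : Finset (Set (ℕ × ℕ)), IsLocalCover k k (Yd ((2 * k).choose k)) C) ∧
    (∀ i : ℕ, ∀ a ∈ Set.Icc 1 i, ∀ a' ∈ Set.Icc 1 i,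
      {b | (a, b) ∈ Yd i} ⊆ {b | (a', b) ∈ Yd i} ∨
      {b | (a', b) ∈ Yd i} ⊆ {b | (a, b) ∈ Yd i}) ∧
    (∀ k : ℕ, ∃ i : ℕ, ¬ ∃ C : Finset (Set (ℕ × ℕ)), IsLocalCover k k (Yd i) C) := by
  have youngPart : ∀ z : ℕ, IsYoung z z (Yd z) := by
    intro z
    constructor
    · intro p hp
      exact ⟨hp.1, hp.2.1⟩
    · intro p hp
      have hmem : ∀ x y : ℕ, 1 ≤ x → x ≤ z → 1 ≤ y → y ≤ z → x + y ≤ z + 1 → (x, y) ∈ Yd z :=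
        fun x y h1 h2 h3 h4 h5 => ⟨Set.mem_Icc.2 ⟨h1, h2⟩, Set.mem_Icc.2 ⟨h3, h4⟩, h5⟩
      simp only [Yd, Set.mem_setOf_eq, Set.mem_Icc] at hp
      constructor <;> intro h <;> apply hmem <;> omega
  refine ⟨fun k hk => ⟨youngPart _, noCover k hk⟩, ?_, ?_⟩
  · intro i a ha a' ha'
    rw [Set.mem_Icc] at ha ha'
    rcases le_total a a' with h | h
    · right
      intro b hb
      simp only [Set.mem_setOf_eq, Yd, Set.mem_Icc] at hb ⊢
      omega
    · left
      intro b hb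
      simp only [Set.mem_setOf_eq, Yd, Set.mem_Icc] at hb ⊢
      omega
  · intro k
    rcases Nat.eq_zero_or_pos k with rfl | hk
    · refine ⟨1, ?_⟩
      rintro ⟨C, ⟨⟨hrect, hcover⟩, hrow, -⟩⟩
      have hp : ((1:ℕ), (1:ℕ)) ∈ Yd 1 := by
        simp only [Yd, Set.mem_setOf_eq, Set.mem_Icc]
        omega
      rw [← hcover] at hp
      simp only [Set.mem_iUnion] at hp
      obtain ⟨R, hR, hpR⟩ := hp
      have : R ∈ C.filter (fun R => UsesRow R 1) := Finset.mem_filter.2 ⟨hR, ⟨1, hpR⟩⟩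
      have h1 := Finset.card_pos.2 ⟨R, this⟩
      have h2 := hrow 1
      omega
    · exact ⟨(2*k).choose k, noCover k hk⟩
end
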